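/- For every positive integer n, R(W_7, K_n) ≥ 2·R(K_4 − e, K_n) − 1. -/

import Mathlib

open SimpleGraph

/-- `H` is contained in `G` as a subgraph. -/
def Contains {α β : Type*} (G : SimpleGraph α) (H : SimpleGraph β) : Prop :=
  ∃ f : H →g G, Function.Injective f

/-- Every red/blue coloring of `K_N` (red = `C`, blue = `Cᶜ`) has a red `G` or blue `H`. -/
def RamseyProp {α β : Type*} (N : ℕ) (G : SimpleGraph α) (H : SimpleGraph β) : Prop :=
  ∀ C : SimpleGraph (Fin N), Contains C G ∨ Contains Cᶜ H

/-- The Ramsey number `R(G, H)`. -/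
noncomputable def ramseyNumber {α β : Type*} (G : SimpleGraph α) (H : SimpleGraph β) : ℕ :=
  sInf {N | RamseyProp N G H}

/-- The join `G + H`: disjoint union plus all edges in between. -/
def graphJoin {α β : Type*} (G : SimpleGraph α) (H : SimpleGraph β) : SimpleGraph (α ⊕ β) :=
  SimpleGraph.fromRel (fun x y =>
    match x, y with
    | Sum.inl a, Sum.inl b => G.Adj a b
    | Sum.inr a, Sum.inr b => H.Adj a b
    | _, _ => True)

/-- The wheel `W_n = K_1 + C_{n-1}` on `n` vertices. -/
def wheel (n : ℕ) : SimpleGraph (Fin 1 ⊕ Fin (n - 1)) :=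
  graphJoin ⊥ (SimpleGraph.cycleGraph (n - 1))

/-- A perfect matching `k • K_2` on `2k` vertices. -/
def matching (k : ℕ) : SimpleGraph (Fin k × Fin 2) :=
  SimpleGraph.fromRel (fun x y => x.1 = y.1)

/-- The fan `F_k = K_1 + k • K_2`. -/
def fan (k : ℕ) : SimpleGraph (Fin 1 ⊕ Fin k × Fin 2) :=
  graphJoin ⊥ (matching k)

/-- The kipas `K̂_n = K_1 + P_{n-1}` on `n` vertices. -/
def kipas (n : ℕ) : SimpleGraph (Fin 1 ⊕ Fin (n - 1)) :=
  graphJoin ⊥ (SimpleGraph.pathGraph (n - 1))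

/-- The blow-up `G[K_2]`: each vertex replaced by an adjacent pair; vertices in
different pairs adjacent iff the original vertices are adjacent. -/
def blowUp {α : Type*} (G : SimpleGraph α) : SimpleGraph (α × Fin 2) :=
  SimpleGraph.fromRel (fun x y => x.1 = y.1 ∨ G.Adj x.1 y.1)


/-- The graph `K_4 - e`. -/
def K4e : SimpleGraph (Fin 4) := (⊤ : SimpleGraph (Fin 4)).deleteEdges {s(0, 1)}

lemma contains_trans {α β γ : Type*} {G : SimpleGraph α} {H : SimpleGraph β} {K : SimpleGraph γ}
    (h1 : Contains G H) (h2 : Contains H K) : Contains G K := by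
  obtain ⟨f, hf⟩ := h1
  obtain ⟨g, hg⟩ := h2
  exact ⟨f.comp g, hf.comp hg⟩

lemma ramseyProp_mono {α β : Type*} {G : SimpleGraph α} {H : SimpleGraph β} {N M : ℕ}
    (h : N ≤ M) (hr : RamseyProp N G H) : RamseyProp M G H := by
  intro C
  have hinj : Function.Injective (Fin.castLE h) := (Fin.strictMono_castLE h).injective
  rcases hr (C.comap (Fin.castLE h)) with ⟨f, hf⟩ | ⟨f, hf⟩
  · exact Or.inl ⟨⟨fun v => Fin.castLE h (f v), fun hadj => f.map_rel' hadj⟩,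
      fun x y hxy => hf (hinj hxy)⟩
  · refine Or.inr ⟨⟨fun v => Fin.castLE h (f v), fun {a b} hadj => ?_⟩,
      fun x y hxy => hf (hinj hxy)⟩
    have := f.map_rel' hadj
    rw [compl_adj] at this ⊢
    exact ⟨fun hc => this.1 (hinj hc), this.2⟩

lemma ramsey_top (s : ℕ) : ∀ t : ℕ, ∃ N : ℕ, ∀ C : SimpleGraph (Fin N),
    Contains C (⊤ : SimpleGraph (Fin s)) ∨ Contains Cᶜ (⊤ : SimpleGraph (Fin t)) := by
  classical
  induction s with
  | zero =>
    intro t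
    exact ⟨0, fun C => Or.inl ⟨⟨Fin.elim0, fun {a b} _ => a.elim0⟩, fun a => a.elim0⟩⟩
  | succ s ihs =>
    intro t
    induction t with
    | zero =>
      exact ⟨0, fun C => Or.inr ⟨⟨Fin.elim0, fun {a b} _ => a.elim0⟩, fun a => a.elim0⟩⟩
    | succ t iht =>
      obtain ⟨N1, h1⟩ := ihs (t + 1)
      obtain ⟨N2, h2⟩ := iht
      refine ⟨N1 + N2 + 1, fun C => ?_⟩
      set v : Fin (N1 + N2 + 1) := Fin.last _ with hv
      set R : Finset (Fin (N1 + N2 + 1)) := Finset.univ.filter (fun x => C.Adj v x) with hR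
      set B : Finset (Fin (N1 + N2 + 1)) := Finset.univ.filter (fun x => x ≠ v ∧ ¬ C.Adj v x) with hB
      have hdisj : Disjoint R B := by
        rw [Finset.disjoint_left]
        intro x hx hx'
        rw [hR, Finset.mem_filter] at hx
        rw [hB, Finset.mem_filter] at hx'
        exact hx'.2.2 hx.2
      have hunion : R ∪ B = Finset.univ.erase v := by
        ext x
        simp only [hR, hB, Finset.mem_union, Finset.mem_filter, Finset.mem_univ, true_and,
          Finset.mem_erase]
        constructor
        · rintro (hx | hx)
          · exact ⟨Ne.symm hx.ne, trivial⟩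
          · exact ⟨hx.1, trivial⟩
        · rintro ⟨hx, -⟩
          by_cases hadj : C.Adj v x
          · exact Or.inl hadj
          · exact Or.inr ⟨hx, hadj⟩
      have hcard : R.card + B.card = N1 + N2 := by
        have h1' := Finset.card_union_of_disjoint hdisj
        rw [hunion, Finset.card_erase_of_mem (Finset.mem_univ v), Finset.card_univ,
          Fintype.card_fin] at h1'
        omega
      have hor : N1 ≤ R.card ∨ N2 ≤ B.card := by omega
      rcases hor with hle | hle
      · obtain ⟨R', hsub, hcardR'⟩ := Finset.exists_subset_card_eq hle
        set g : Fin N1 → Fin (N1 + N2 + 1) := fun i => (R'.orderIsoOfFin hcardR' i : Fin _) with hgdef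
        have hginj : Function.Injective g := fun x y hxy =>
          (R'.orderIsoOfFin hcardR').injective (Subtype.coe_injective hxy)
        have hgR : ∀ i, C.Adj v (g i) := by
          intro i
          have hmem := hsub (R'.orderIsoOfFin hcardR' i).2
          rw [hR, Finset.mem_filter] at hmem
          exact hmem.2
        rcases h1 (C.comap g) with ⟨f, hf⟩ | ⟨f, hf⟩
        · left
          refine ⟨⟨Fin.lastCases v (fun i => g (f i)), ?_⟩, ?_⟩
          · intro a b hab
            rw [top_adj _ _] at hab
            induction a using Fin.lastCases with
            | last =>
              induction b using Fin.lastCases with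
              | last => exact absurd rfl hab
              | cast j => simpa using hgR (f j)
            | cast i =>
              induction b using Fin.lastCases with
              | last => simpa using (hgR (f i)).symm
              | cast j =>
                have hij : i ≠ j := fun hc => hab (by rw [hc])
                have := f.map_rel' ((top_adj _ _).mpr hij)
                simpa using this
          · intro a b hab
            have hab' : (Fin.lastCases (motive := fun _ => Fin (N1 + N2 + 1)) v
                  (fun i => g (f i))) a
                = (Fin.lastCases (motive := fun _ => Fin (N1 + N2 + 1)) v
                  (fun i => g (f i))) b := hab
            clear hab
            rcases Fin.eq_castSucc_or_eq_last a with ⟨i, rfl⟩ | rfl <;>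
              rcases Fin.eq_castSucc_or_eq_last b with ⟨j, rfl⟩ | rfl <;>
              simp only [Fin.lastCases_last, Fin.lastCases_castSucc] at hab'
            · rw [hf (hginj hab')]
            · exact absurd hab' (hgR (f i)).ne'
            · exact absurd hab'.symm (hgR (f j)).ne'
            · rfl
        · right
          refine ⟨⟨fun x => g (f x), fun {a b} hab => ?_⟩, fun x y hxy => hf (hginj hxy)⟩
          have := f.map_rel' hab
          rw [compl_adj] at this ⊢
          exact ⟨hginj.ne this.1, this.2⟩
      · obtain ⟨B', hsub, hcardB'⟩ := Finset.exists_subset_card_eq hle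
        set g : Fin N2 → Fin (N1 + N2 + 1) := fun i => (B'.orderIsoOfFin hcardB' i : Fin _) with hgdef
        have hginj : Function.Injective g := fun x y hxy =>
          (B'.orderIsoOfFin hcardB').injective (Subtype.coe_injective hxy)
        have hgB : ∀ i, g i ≠ v ∧ ¬ C.Adj v (g i) := by
          intro i
          have hmem := hsub (B'.orderIsoOfFin hcardB' i).2
          rw [hB, Finset.mem_filter] at hmem
          exact hmem.2
        rcases h2 (C.comap g) with ⟨f, hf⟩ | ⟨f, hf⟩
        · left
          exact ⟨⟨fun x => g (f x), fun {a b} hab => f.map_rel' hab⟩,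
            fun x y hxy => hf (hginj hxy)⟩
        · right
          refine ⟨⟨Fin.lastCases v (fun i => g (f i)), ?_⟩, ?_⟩
          · intro a b hab
            rw [top_adj _ _] at hab
            induction a using Fin.lastCases with
            | last =>
              induction b using Fin.lastCases with
              | last => exact absurd rfl hab
              | cast j =>
                simp only [Fin.lastCases_last, Fin.lastCases_castSucc]
                rw [compl_adj]
                exact ⟨(hgB (f j)).1.symm, fun hc => (hgB (f j)).2 hc⟩
            | cast i =>
              induction b using Fin.lastCases with
              | last =>
                simp only [Fin.lastCases_last, Fin.lastCases_castSucc]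
                rw [compl_adj]
                exact ⟨(hgB (f i)).1, fun hc => (hgB (f i)).2 hc.symm⟩
              | cast j =>
                have hij : i ≠ j := fun hc => hab (by rw [hc])
                have := f.map_rel' ((top_adj _ _).mpr hij)
                rw [compl_adj] at this
                simp only [Fin.lastCases_castSucc]
                rw [compl_adj]
                exact ⟨hginj.ne this.1, this.2⟩
          · intro a b hab
            have hab' : (Fin.lastCases (motive := fun _ => Fin (N1 + N2 + 1)) v
                  (fun i => g (f i))) a
                = (Fin.lastCases (motive := fun _ => Fin (N1 + N2 + 1)) v
                  (fun i => g (f i))) b := hab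
            clear hab
            rcases Fin.eq_castSucc_or_eq_last a with ⟨i, rfl⟩ | rfl <;>
              rcases Fin.eq_castSucc_or_eq_last b with ⟨j, rfl⟩ | rfl <;>
              simp only [Fin.lastCases_last, Fin.lastCases_castSucc] at hab'
            · rw [hf (hginj hab')]
            · exact absurd hab' (hgB (f i)).1
            · exact absurd hab'.symm (hgB (f j)).1
            · rfl

section Pattern

variable {α : Type*}

lemma pattern0 (a : α) (s : Fin 6 → α)
    (h2 : ∀ i j l : Fin 6, i ≠ j → i ≠ l → j ≠ l → s i = s j → s i ≠ s l)
    (ha : ∀ i j : Fin 6, i ≠ j → s i = a → s j ≠ a)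
    (h0 : s 0 ≠ a) (h1 : s 1 ≠ a) (h01 : s 0 ≠ s 1) :
    ∃ i i' j k : Fin 6, s i = s i' ∧ s i ≠ a ∧ s j ≠ a ∧ s k ≠ a ∧ s j ≠ s i ∧
      s k ≠ s i ∧ s j ≠ s k ∧ (j = i + 1 ∨ i = j + 1) ∧ (k = i' + 1 ∨ i' = k + 1) := by
  by_cases h2a : s 2 = a
  · have h3a : s 3 ≠ a := fun h => ha 2 3 (by decide) h2a h
    have h4a : s 4 ≠ a := fun h => ha 2 4 (by decide) h2a h
    have h5a : s 5 ≠ a := fun h => ha 2 5 (by decide) h2a h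
    by_cases h5x : s 5 = s 0
    · by_cases h4y : s 4 = s 1
      · by_cases h3x : s 3 = s 0
        · exact absurd h3x.symm (h2 0 5 3 (by decide) (by decide) (by decide) h5x.symm)
        · by_cases h3y : s 3 = s 1
          · exact absurd h3y.symm (h2 1 4 3 (by decide) (by decide) (by decide) h4y.symm)
          · exact ⟨4, 4, 3, 5, rfl, h4a, h3a, h5a, fun h => h3y (h.trans h4y),
              fun h => h01 (h5x.symm.trans (h.trans h4y)), fun h => h3x (h.trans h5x),
              Or.inr (by decide), Or.inl (by decide)⟩
      · by_cases h4x : s 4 = s 0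
        · exact absurd h4x.symm (h2 0 5 4 (by decide) (by decide) (by decide) h5x.symm)
        · exact ⟨0, 5, 1, 4, h5x.symm, h0, h1, h4a, Ne.symm h01, h4x, fun h => h4y h.symm,
            Or.inl (by decide), Or.inr (by decide)⟩
    · by_cases h5y : s 5 = s 1
      · by_cases h4y : s 4 = s 1
        · exact absurd h4y.symm (h2 1 5 4 (by decide) (by decide) (by decide) h5y.symm)
        · by_cases h4x : s 4 = s 0
          · by_cases h3x : s 3 = s 0
            · exact absurd h3x.symm (h2 0 4 3 (by decide) (by decide) (by decide) h4x.symm)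
            · by_cases h3y : s 3 = s 1
              · exact absurd h3y.symm (h2 1 5 3 (by decide) (by decide) (by decide) h5y.symm)
              · exact ⟨4, 4, 3, 5, rfl, h4a, h3a, h5a, fun h => h3x (h.trans h4x),
                  fun h => h01 (h5y.symm.trans (h.trans h4x)).symm, fun h => h3y (h.trans h5y),
                  Or.inr (by decide), Or.inl (by decide)⟩
          · exact ⟨1, 5, 0, 4, h5y.symm, h1, h0, h4a, h01, h4y, fun h => h4x h.symm,
              Or.inr (by decide), Or.inr (by decide)⟩
      · exact ⟨0, 0, 5, 1, rfl, h0, h5a, h1, h5x, Ne.symm h01, h5y,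
          Or.inr (by decide), Or.inl (by decide)⟩
  · by_cases h2x : s 2 = s 0
    · by_cases h3a : s 3 = a
      · have h4a : s 4 ≠ a := fun h => ha 3 4 (by decide) h3a h
        have h5a : s 5 ≠ a := fun h => ha 3 5 (by decide) h3a h
        by_cases h5x : s 5 = s 0
        · exact absurd h5x.symm (h2 0 2 5 (by decide) (by decide) (by decide) h2x.symm)
        · by_cases h5y : s 5 = s 1
          · by_cases h4x : s 4 = s 0
            · exact absurd h4x.symm (h2 0 2 4 (by decide) (by decide) (by decide) h2x.symm)
            · by_cases h4y : s 4 = s 1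
              · exact absurd h4y.symm (h2 1 5 4 (by decide) (by decide) (by decide) h5y.symm)
              · exact ⟨5, 5, 4, 0, rfl, h5a, h4a, h0, fun h => h4y (h.trans h5y),
                  fun h => h5x h.symm, h4x, Or.inr (by decide), Or.inl (by decide)⟩
          · exact ⟨0, 0, 5, 1, rfl, h0, h5a, h1, h5x, Ne.symm h01, h5y,
              Or.inr (by decide), Or.inl (by decide)⟩
      · by_cases h3x : s 3 = s 0
        · exact absurd h3x.symm (h2 0 2 3 (by decide) (by decide) (by decide) h2x.symm)
        · by_cases h3y : s 3 = s 1
          · by_cases h4a : s 4 = a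
            · have h5a : s 5 ≠ a := fun h => ha 4 5 (by decide) h4a h
              have h5x : s 5 ≠ s 0 :=
                fun h => (h2 0 2 5 (by decide) (by decide) (by decide) h2x.symm) h.symm
              have h5y : s 5 ≠ s 1 :=
                fun h => (h2 1 3 5 (by decide) (by decide) (by decide) h3y.symm) h.symm
              exact ⟨0, 0, 5, 1, rfl, h0, h5a, h1, h5x, Ne.symm h01, h5y,
                Or.inr (by decide), Or.inl (by decide)⟩
            · by_cases h4x : s 4 = s 0
              · exact absurd h4x.symm (h2 0 2 4 (by decide) (by decide) (by decide) h2x.symm)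
              · by_cases h4y : s 4 = s 1
                · exact absurd h4y.symm (h2 1 3 4 (by decide) (by decide) (by decide) h3y.symm)
                · exact ⟨3, 3, 2, 4, rfl, h3a, h2a, h4a,
                    fun h => h01 ((h2x.symm.trans h).trans h3y), fun h => h4y (h.trans h3y),
                    fun h => h4x (h.symm.trans h2x), Or.inr (by decide), Or.inl (by decide)⟩
          · exact ⟨2, 2, 1, 3, rfl, h2a, h1, h3a, fun h => h01 (h.trans h2x).symm,
              fun h => h3x (h.trans h2x), fun h => h3y h.symm,
              Or.inr (by decide), Or.inl (by decide)⟩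
    · by_cases h2y : s 2 = s 1
      · by_cases h3a : s 3 = a
        · have h4a : s 4 ≠ a := fun h => ha 3 4 (by decide) h3a h
          have h5a : s 5 ≠ a := fun h => ha 3 5 (by decide) h3a h
          by_cases h5y : s 5 = s 1
          · exact absurd h5y.symm (h2 1 2 5 (by decide) (by decide) (by decide) h2y.symm)
          · by_cases h5x : s 5 = s 0
            · by_cases h4x : s 4 = s 0
              · exact absurd h4x.symm (h2 0 5 4 (by decide) (by decide) (by decide) h5x.symm)
              · by_cases h4y : s 4 = s 1
                · exact absurd h4y.symm (h2 1 2 4 (by decide) (by decide) (by decide) h2y.symm)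
                · exact ⟨5, 0, 4, 1, h5x, h5a, h4a, h1, fun h => h4x (h.trans h5x),
                    fun h => h5y h.symm, h4y, Or.inr (by decide), Or.inl (by decide)⟩
            · exact ⟨0, 0, 5, 1, rfl, h0, h5a, h1, h5x, Ne.symm h01, h5y,
                Or.inr (by decide), Or.inl (by decide)⟩
        · by_cases h3y : s 3 = s 1
          · exact absurd h3y.symm (h2 1 2 3 (by decide) (by decide) (by decide) h2y.symm)
          · by_cases h3x : s 3 = s 0
            · by_cases h4a : s 4 = a
              · have h5a : s 5 ≠ a := fun h => ha 4 5 (by decide) h4a h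
                have h5x : s 5 ≠ s 0 :=
                  fun h => (h2 0 3 5 (by decide) (by decide) (by decide) h3x.symm) h.symm
                have h5y : s 5 ≠ s 1 :=
                  fun h => (h2 1 2 5 (by decide) (by decide) (by decide) h2y.symm) h.symm
                exact ⟨0, 0, 5, 1, rfl, h0, h5a, h1, h5x, Ne.symm h01, h5y,
                  Or.inr (by decide), Or.inl (by decide)⟩
              · by_cases h4x : s 4 = s 0
                · exact absurd h4x.symm (h2 0 3 4 (by decide) (by decide) (by decide) h3x.symm)
                · by_cases h4y : s 4 = s 1
                  · exact absurd h4y.symm (h2 1 2 4 (by decide) (by decide) (by decide) h2y.symm)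
                  · exact ⟨3, 3, 2, 4, rfl, h3a, h2a, h4a,
                      fun h => h01 (h3x.symm.trans (h.symm.trans h2y)),
                      fun h => h4x (h.trans h3x), fun h => h4y (h.symm.trans h2y),
                      Or.inr (by decide), Or.inl (by decide)⟩
            · exact ⟨1, 2, 0, 3, h2y.symm, h1, h0, h3a, h01, h3y, fun h => h3x h.symm,
                Or.inr (by decide), Or.inl (by decide)⟩
      · exact ⟨1, 1, 0, 2, rfl, h1, h0, h2a, h01, h2y, fun h => h2x h.symm,
          Or.inr (by decide), Or.inl (by decide)⟩

end Pattern

lemma pattern {α : Type*} (a : α) (s : Fin 6 → α)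
    (h2 : ∀ i j l : Fin 6, i ≠ j → i ≠ l → j ≠ l → s i = s j → s i ≠ s l)
    (ha : ∀ i j : Fin 6, i ≠ j → s i = a → s j ≠ a) :
    ∃ i i' j k : Fin 6, s i = s i' ∧ s i ≠ a ∧ s j ≠ a ∧ s k ≠ a ∧ s j ≠ s i ∧
      s k ≠ s i ∧ s j ≠ s k ∧ (j = i + 1 ∨ i = j + 1) ∧ (k = i' + 1 ∨ i' = k + 1) := by
  classical
  have d1 : ∀ q : Fin 6, q ≠ q + 1 := by decide
  have d2 : ∀ q : Fin 6, q ≠ q + 2 := by decide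
  have d3 : ∀ q : Fin 6, q ≠ q + 3 := by decide
  have d12 : ∀ q : Fin 6, q + 1 ≠ q + 2 := by decide
  have d13 : ∀ q : Fin 6, q + 1 ≠ q + 3 := by decide
  have d23 : ∀ q : Fin 6, q + 2 ≠ q + 3 := by decide
  have e11 : ∀ q : Fin 6, q + 1 + 1 = q + 2 := by decide
  have e21 : ∀ q : Fin 6, q + 2 + 1 = q + 3 := by decide
  have key : ∃ p : Fin 6, s p ≠ a ∧ s (p + 1) ≠ a ∧ s p ≠ s (p + 1) := by
    by_cases hex : ∃ q, s q = a
    · obtain ⟨q, hq⟩ := hex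
      have n1 : s (q + 1) ≠ a := ha q (q + 1) (d1 q) hq
      have n2 : s (q + 2) ≠ a := ha q (q + 2) (d2 q) hq
      have n3 : s (q + 3) ≠ a := ha q (q + 3) (d3 q) hq
      by_cases hd : s (q + 1) = s (q + 2)
      · refine ⟨q + 2, n2, ?_, ?_⟩
        · rw [e21 q]; exact n3
        · rw [e21 q]
          exact fun h => (h2 (q + 1) (q + 2) (q + 3) (d12 q) (d13 q) (d23 q) hd) (hd.trans h)
      · exact ⟨q + 1, n1, by rw [e11 q]; exact n2, by rw [e11 q]; exact hd⟩
    · push_neg at hex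
      by_cases hd : s 0 = s 1
      · refine ⟨1, hex 1, hex (1 + 1), ?_⟩
        exact fun h => (h2 0 1 (1 + 1) (by decide) (by decide) (by decide) hd) (hd.trans h)
      · exact ⟨0, hex 0, hex (0 + 1), by rw [zero_add]; exact hd⟩
  obtain ⟨p, hp0, hp1, hp01⟩ := key
  obtain ⟨i, i', j, k, e1, e2, e3, e4, e5, e6, e7, e8, e9⟩ :=
    pattern0 a (fun k => s (k + p))
      (fun i j l hij hil hjl hh => h2 (i + p) (j + p) (l + p)
        (fun h => hij (add_right_cancel h)) (fun h => hil (add_right_cancel h))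
        (fun h => hjl (add_right_cancel h)) hh)
      (fun i j hij hi => ha (i + p) (j + p) (fun h => hij (add_right_cancel h)) hi)
      (by simpa using hp0) (by simpa [add_comm] using hp1)
      (by simpa [zero_add, add_comm] using hp01)
  refine ⟨i + p, i' + p, j + p, k + p, e1, e2, e3, e4, e5, e6, e7, ?_, ?_⟩
  · rcases e8 with h | h
    · exact Or.inl (by rw [h, add_right_comm])
    · exact Or.inr (by rw [h, add_right_comm])
  · rcases e9 with h | h
    · exact Or.inl (by rw [h, add_right_comm])
    · exact Or.inr (by rw [h, add_right_comm])

lemma blowup_no_wheel {α : Type*} (C : SimpleGraph α) (hC : ¬ Contains C K4e) :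
    ¬ Contains (blowUp C) (wheel 7) := by
  rintro ⟨f, hf⟩
  set a : α := (f (Sum.inl 0)).1 with hadef
  set s : Fin 6 → α := fun k => (f (Sum.inr k)).1 with hsdef
  have pigeon : ∀ x y z : α × Fin 2, x.1 = y.1 → x.1 = z.1 → x ≠ y → x ≠ z → y ≠ z → False := by
    intro x y z h1 h2 n1 n2 n3
    have htwo : ∀ b1 b2 b3 : Fin 2, b1 ≠ b2 → b1 ≠ b3 → b2 ≠ b3 → False := by decide
    exact htwo x.2 y.2 z.2 (fun h => n1 (Prod.ext_iff.mpr ⟨h1, h⟩))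
      (fun h => n2 (Prod.ext_iff.mpr ⟨h2, h⟩))
      (fun h => n3 (Prod.ext_iff.mpr ⟨h1.symm.trans h2, h⟩))
  have hub_adj : ∀ k : Fin 6, (wheel 7).Adj (Sum.inl 0) (Sum.inr k) := by
    intro k
    rw [wheel, graphJoin, SimpleGraph.fromRel_adj]
    exact ⟨fun h => Sum.inl_ne_inr h, Or.inl trivial⟩
  have d1 : ∀ q : Fin 6, q ≠ q + 1 := by decide
  have cyc_adj : ∀ k : Fin 6, (wheel 7).Adj (Sum.inr k) (Sum.inr (k + 1)) := by
    intro k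
    rw [wheel, graphJoin, SimpleGraph.fromRel_adj]
    refine ⟨fun h => d1 k (Sum.inr.inj h), Or.inl ?_⟩
    show (SimpleGraph.cycleGraph 6).Adj k (k + 1)
    rw [SimpleGraph.cycleGraph_adj']
    right
    rw [add_sub_cancel_left]
    rfl
  have adj_hub : ∀ k : Fin 6, s k = a ∨ C.Adj a (s k) := by
    intro k
    have h := f.map_rel' (hub_adj k)
    unfold blowUp at h; rw [SimpleGraph.fromRel_adj] at h
    rcases h.2 with (h' | h') | (h' | h')
    · exact Or.inl h'.symm
    · exact Or.inr h'
    · exact Or.inl h'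
    · exact Or.inr h'.symm
  have adj_cyc : ∀ k : Fin 6, s k = s (k + 1) ∨ C.Adj (s k) (s (k + 1)) := by
    intro k
    have h := f.map_rel' (cyc_adj k)
    unfold blowUp at h; rw [SimpleGraph.fromRel_adj] at h
    rcases h.2 with (h' | h') | (h' | h')
    · exact Or.inl h'
    · exact Or.inr h'
    · exact Or.inl h'.symm
    · exact Or.inr h'.symm
  have fib2 : ∀ i j l : Fin 6, i ≠ j → i ≠ l → j ≠ l → s i = s j → s i ≠ s l := by
    intro i j l hij hil hjl hsij hsil
    exact pigeon (f (Sum.inr i)) (f (Sum.inr j)) (f (Sum.inr l)) hsij hsil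
      (fun h => hij (Sum.inr.inj (hf h))) (fun h => hil (Sum.inr.inj (hf h)))
      (fun h => hjl (Sum.inr.inj (hf h)))
  have fiba : ∀ i j : Fin 6, i ≠ j → s i = a → s j ≠ a := by
    intro i j hij hi hj
    exact pigeon (f (Sum.inl 0)) (f (Sum.inr i)) (f (Sum.inr j)) hi.symm hj.symm
      (fun h => Sum.inl_ne_inr (hf h)) (fun h => Sum.inl_ne_inr (hf h))
      (fun h => hij (Sum.inr.inj (hf h)))
  obtain ⟨i, i', j, k, e1, e2, e3, e4, e5, e6, e7, e8, e9⟩ := pattern a s fib2 fiba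
  have hai : C.Adj a (s i) := (adj_hub i).resolve_left e2
  have haj : C.Adj a (s j) := (adj_hub j).resolve_left e3
  have hak : C.Adj a (s k) := (adj_hub k).resolve_left e4
  have hij : C.Adj (s i) (s j) := by
    rcases e8 with h | h
    · have := (adj_cyc i).resolve_left (by rw [← h]; exact fun hh => e5 hh.symm)
      rwa [← h] at this
    · have := (adj_cyc j).resolve_left (by rw [← h]; exact e5)
      rw [← h] at this
      exact this.symm
  have hik : C.Adj (s i) (s k) := by
    rw [e1]
    rcases e9 with h | h
    · have := (adj_cyc i').resolve_left
        (by rw [← h]; exact fun hh => e6 (e1.trans hh).symm)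
      rwa [← h] at this
    · have := (adj_cyc k).resolve_left (by rw [← h]; exact fun hh => e6 (hh.trans e1.symm))
      rw [← h] at this
      exact this.symm
  apply hC
  refine ⟨⟨![s j, s k, a, s i], ?_⟩, ?_⟩
  · intro x y hxy
    have hxy' : x ≠ y ∧ ¬((x = 0 ∧ y = 1) ∨ (x = 1 ∧ y = 0)) := by
      rw [K4e, SimpleGraph.deleteEdges_adj, SimpleGraph.top_adj] at hxy
      exact ⟨hxy.1, by simpa [Sym2.eq_iff] using hxy.2⟩
    clear hxy
    fin_cases x <;> fin_cases y <;>
      first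
        | exact absurd hxy' (by decide)
        | exact haj.symm
        | exact hij.symm
        | exact hak.symm
        | exact hik.symm
        | exact hai
        | exact hai.symm
        | exact hij
        | exact hik
        | exact haj
        | exact hak
  · intro x y h
    have h' : (![s j, s k, a, s i] : Fin 4 → α) x = ![s j, s k, a, s i] y := h
    clear h
    fin_cases x <;> fin_cases y <;>
      first
        | rfl
        | exact absurd h' e7
        | exact absurd h'.symm e7
        | exact absurd h' e3
        | exact absurd h'.symm e3
        | exact absurd h' e5
        | exact absurd h'.symm e5
        | exact absurd h' e4
        | exact absurd h'.symm e4
        | exact absurd h' e6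
        | exact absurd h'.symm e6
        | exact absurd h' e2
        | exact absurd h'.symm e2

lemma blowup_compl {α : Type*} (C : SimpleGraph α) {n : ℕ}
    (h : ¬ Contains Cᶜ (⊤ : SimpleGraph (Fin n))) :
    ¬ Contains (blowUp C)ᶜ (⊤ : SimpleGraph (Fin n)) := by
  rintro ⟨f, hf⟩
  apply h
  refine ⟨⟨fun x => (f x).1, ?_⟩, ?_⟩
  · intro x y hxy
    have hc := f.map_rel' hxy
    rw [compl_adj] at hc
    obtain ⟨hne, hnadj⟩ := hc
    have hnrel : ¬((((f x).1 = (f y).1) ∨ C.Adj (f x).1 (f y).1) ∨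
        (((f y).1 = (f x).1) ∨ C.Adj (f y).1 (f x).1)) := by
      intro hrel
      apply hnadj
      unfold blowUp
      rw [SimpleGraph.fromRel_adj]
      exact ⟨hne, hrel⟩
    rw [compl_adj]
    exact ⟨fun hh => hnrel (Or.inl (Or.inl hh)), fun hh => hnrel (Or.inl (Or.inr hh))⟩
  · intro x y hxy
    by_contra hne
    have hadj := f.map_rel' ((top_adj x y).mpr hne)
    rw [compl_adj] at hadj
    apply hadj.2
    unfold blowUp
    rw [SimpleGraph.fromRel_adj]
    exact ⟨hadj.1, Or.inl (Or.inl hxy)⟩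

lemma wheel_le_top {γ : Type*} (C : SimpleGraph γ)
    (h : Contains C (⊤ : SimpleGraph (Fin 7))) : Contains C (wheel 7) := by
  obtain ⟨f, hf⟩ := h
  have minj : Function.Injective
      (Sum.elim (fun _ => (0 : Fin 7)) (fun k : Fin 6 => k.succ) :
        Fin 1 ⊕ Fin 6 → Fin 7) := by
    rintro (x | x) (y | y) hxy
    · rw [Subsingleton.elim x y]
    · exact absurd hxy.symm (Fin.succ_ne_zero y)
    · exact absurd hxy (Fin.succ_ne_zero x)
    · rw [Fin.succ_injective _ hxy]
  refine ⟨f.comp ⟨Sum.elim (fun _ => (0 : Fin 7)) (fun k : Fin 6 => k.succ), ?_⟩, ?_⟩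
  · intro x y hxy
    exact (top_adj _ _).mpr (fun hc => hxy.ne (minj hc))
  · exact hf.comp minj


theorem stmt_5 (n : ℕ) (hn : 1 ≤ n) :
    2 * ramseyNumber K4e (⊤ : SimpleGraph (Fin n)) - 1 ≤
      ramseyNumber (wheel 7) (⊤ : SimpleGraph (Fin n)) := by
  set m := ramseyNumber K4e (⊤ : SimpleGraph (Fin n)) with hm
  rcases Nat.eq_zero_or_pos m with h0 | hpos
  · omega
  · have hSne : {N | RamseyProp N (wheel 7) (⊤ : SimpleGraph (Fin n))}.Nonempty := by
      obtain ⟨N, hN⟩ := ramsey_top 7 n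
      exact ⟨N, fun C => (hN C).imp (wheel_le_top C) id⟩
    have hnotm : ¬ RamseyProp (m - 1) K4e (⊤ : SimpleGraph (Fin n)) := by
      intro hR
      have hle : m ≤ m - 1 := Nat.sInf_le hR
      omega
    rw [RamseyProp] at hnotm
    push_neg at hnotm
    obtain ⟨C, hC1, hC2⟩ := hnotm
    have hW : ¬ RamseyProp (2 * (m - 1)) (wheel 7) (⊤ : SimpleGraph (Fin n)) := by
      intro hR
      have e : Fin (m - 1) × Fin 2 ≃ Fin (2 * (m - 1)) :=
        finProdFinEquiv.trans (finCongr (mul_comm _ _))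
      rcases hR ((blowUp C).comap e.symm) with ⟨f, hf⟩ | ⟨f, hf⟩
      · exact blowup_no_wheel C hC1
          ⟨(⟨fun x => e.symm x, fun {u v} h => h⟩ :
              (blowUp C).comap e.symm →g blowUp C).comp f,
            (e.symm.injective).comp hf⟩
      · apply blowup_compl C hC2
        refine ⟨⟨fun v => e.symm (f v), ?_⟩, fun x y h => hf (e.symm.injective h)⟩
        intro x y hxy
        have hc := f.map_rel' hxy
        rw [compl_adj] at hc ⊢
        exact ⟨fun hh => hc.1 (e.symm.injective hh), hc.2⟩
    have hnotle : ¬ (ramseyNumber (wheel 7) (⊤ : SimpleGraph (Fin n)) ≤ 2 * (m - 1)) :=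
      fun hle => hW (ramseyProp_mono hle (Nat.sInf_mem hSne))
    omega
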